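/- arXiv:2106.13729 — 5 statements merged into one kernel-verified Lean document; each statement's English description precedes it below -/
import Mathlib

section
/- Let a < b be real numbers, let f : ℝ × ℝ → ℂ be continuous on [a,b] × [a,b], and let M := sup of |f| on [a,b] × [a,b]. Then for every n ≥ 1 and all x, y ∈ [a,b] with y ≤ x, the iterated Volterra power satisfies |f^{∗n}(x, y)| ≤ Mⁿ · (x − y)^{n−1} / (n−1)!. -/
noncomputable def volterraComp (f l : ℝ × ℝ → ℂ) : ℝ × ℝ → ℂ :=
  fun p => ∫ ζ in p.2..p.1, f (p.1, ζ) * l (ζ, p.2)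

/-- `volterraPow f n` is the iterated Volterra power `f^{∗(n+1)}`,
so that `volterraPow f 0 = f^{∗1} = f`. -/
noncomputable def volterraPow (f : ℝ × ℝ → ℂ) : ℕ → ℝ × ℝ → ℂ
  | 0 => f
  | n + 1 => volterraComp f (volterraPow f n)

/-- Factorial bound on the iterated Volterra powers of a continuous kernel:
`|f^{∗n}(x,y)| ≤ Mⁿ (x-y)^{n-1} / (n-1)!` where `M = sup |f|` on the square. -/
theorem volterraPow_bound (a b : ℝ) (hab : a < b) (f : ℝ × ℝ → ℂ)
    (hf : ContinuousOn f (Set.Icc a b ×ˢ Set.Icc a b))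
    (M : ℝ) (hM : M = sSup ((fun p => ‖f p‖) '' (Set.Icc a b ×ˢ Set.Icc a b))) :
    ∀ n : ℕ, 1 ≤ n → ∀ x ∈ Set.Icc a b, ∀ y ∈ Set.Icc a b, y ≤ x →
      ‖volterraPow f (n - 1) (x, y)‖ ≤
        M ^ n * (x - y) ^ (n - 1) / (Nat.factorial (n - 1)) := by
  have hK : IsCompact (Set.Icc a b ×ˢ Set.Icc a b) :=
    (isCompact_Icc).prod isCompact_Icc
  have hbdd : BddAbove ((fun p => ‖f p‖) '' (Set.Icc a b ×ˢ Set.Icc a b)) :=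
    (hK.image_of_continuousOn (continuous_norm.comp_continuousOn hf)).bddAbove
  have hle : ∀ p ∈ Set.Icc a b ×ˢ Set.Icc a b, ‖f p‖ ≤ M := by
    intro p hp
    rw [hM]
    exact le_csSup hbdd ⟨p, hp, rfl⟩
  have hM0 : 0 ≤ M :=
    le_trans (norm_nonneg (f (a, a)))
      (hle (a, a) ⟨⟨le_rfl, hab.le⟩, ⟨le_rfl, hab.le⟩⟩)
  -- main induction
  have key : ∀ m : ℕ, ∀ x ∈ Set.Icc a b, ∀ y ∈ Set.Icc a b, y ≤ x →
      ‖volterraPow f m (x, y)‖ ≤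
        M ^ (m + 1) * (x - y) ^ m / (Nat.factorial m) := by
    intro m
    induction m with
    | zero =>
      intro x hx y hy hyx
      simpa [volterraPow] using hle (x, y) ⟨hx, hy⟩
    | succ m ih =>
      intro x hx y hy hyx
      have hstep : ‖volterraPow f (m + 1) (x, y)‖ ≤
          |∫ ζ in y..x, M * (M ^ (m + 1) * (ζ - y) ^ m / (Nat.factorial m))| := by
        show ‖∫ ζ in y..x, f (x, ζ) * volterraPow f m (ζ, y)‖ ≤ _
        apply intervalIntegral.norm_integral_le_abs_of_norm_le
        · rw [Set.uIoc_of_le hyx]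
          filter_upwards [MeasureTheory.ae_restrict_mem measurableSet_Ioc] with ζ hζ
          have hζab : ζ ∈ Set.Icc a b := ⟨hy.1.trans hζ.1.le, hζ.2.trans hx.2⟩
          rw [norm_mul]
          gcongr
          · exact hle (x, ζ) ⟨hx, hζab⟩
          · exact ih ζ hζab y hy hζ.1.le
        · apply IntervalIntegrable.const_mul
          apply IntervalIntegrable.div_const
          apply IntervalIntegrable.const_mul
          exact (ContinuousOn.intervalIntegrable (by fun_prop))
      refine hstep.trans ?_
      have hint : (∫ ζ in y..x, M * (M ^ (m + 1) * (ζ - y) ^ m / (Nat.factorial m)))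
          = M ^ (m + 2) * (x - y) ^ (m + 1) / (Nat.factorial (m + 1)) := by
        rw [intervalIntegral.integral_const_mul]
        have h1 : (∫ ζ in y..x, M ^ (m + 1) * (ζ - y) ^ m / (Nat.factorial m))
            = (M ^ (m + 1) / (Nat.factorial m)) * ∫ ζ in y..x, (ζ - y) ^ m := by
          rw [← intervalIntegral.integral_const_mul]
          congr 1; ext ζ; ring
        have h2 : (∫ ζ in y..x, (ζ - y) ^ m) = (x - y) ^ (m + 1) / (m + 1) := by
          have := intervalIntegral.integral_comp_sub_right (fun t => t ^ m) y (a := y) (b := x)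
          rw [this, sub_self, integral_pow]
          simp
        rw [h1, h2, Nat.factorial_succ]
        push_cast
        field_simp
        ring
      have hxy : (0:ℝ) ≤ x - y := sub_nonneg.2 hyx
      rw [hint, abs_of_nonneg (by positivity)]
  intro n hn x hx y hy hyx
  obtain ⟨m, rfl⟩ := Nat.exists_eq_add_of_le hn
  simpa [Nat.add_sub_cancel_left, add_comm] using key m x hx y hy hyx
end

section
/- Let a < b be real numbers and let f : ℝ × ℝ → ℂ be continuous on [a,b] × [a,b]. Then the Neumann series ∑_{n=1}^∞ f^{∗n}(x, y) of iterated Volterra powers converges absolutely and uniformly on the set {(x, y) ∈ [a,b] × [a,b] : y ≤ x}. -/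
lemma volterra_cont_comp {F l : ℝ × ℝ → ℂ} (hF : Continuous F) (hl : Continuous l) :
    Continuous (volterraComp F l) := by
  have hH : Continuous (Function.uncurry fun (p : ℝ × ℝ) (t : ℝ) => F (p.1, t) * l (t, p.2)) := by
    apply Continuous.mul
    · exact hF.comp (by fun_prop)
    · exact hl.comp (by fun_prop)
  have h1 : Continuous fun p : ℝ × ℝ => ∫ t in (0:ℝ)..p.1, F (p.1, t) * l (t, p.2) :=
    intervalIntegral.continuous_parametric_intervalIntegral_of_continuous hH continuous_fst
  have h2 : Continuous fun p : ℝ × ℝ => ∫ t in (0:ℝ)..p.2, F (p.1, t) * l (t, p.2) :=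
    intervalIntegral.continuous_parametric_intervalIntegral_of_continuous hH continuous_snd
  have : volterraComp F l = fun p : ℝ × ℝ =>
      (∫ t in (0:ℝ)..p.1, F (p.1, t) * l (t, p.2)) -
      ∫ t in (0:ℝ)..p.2, F (p.1, t) * l (t, p.2) := by
    funext p
    rw [intervalIntegral.integral_interval_sub_left]
    · rfl
    · exact Continuous.intervalIntegrable (by fun_prop) _ _
    · exact Continuous.intervalIntegrable (by fun_prop) _ _
  rw [this]; exact h1.sub h2

lemma volterra_cont_pow {F : ℝ × ℝ → ℂ} (hF : Continuous F) (n : ℕ) :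
    Continuous (volterraPow F n) := by
  induction n with
  | zero => exact hF
  | succ n ih => exact volterra_cont_comp hF ih

lemma volterra_pow_congr {a b : ℝ} {f F : ℝ × ℝ → ℂ}
    (hfF : ∀ p ∈ Set.Icc a b ×ˢ Set.Icc a b, f p = F p) (n : ℕ) :
    ∀ p ∈ {p : ℝ × ℝ | p ∈ Set.Icc a b ×ˢ Set.Icc a b ∧ p.2 ≤ p.1},
      volterraPow f n p = volterraPow F n p := by
  induction n with
  | zero => exact fun p hp => hfF p hp.1
  | succ n ih =>
    rintro ⟨x, y⟩ ⟨⟨hx, hy⟩, hyx⟩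
    simp only [Set.mem_Icc] at hx hy
    show (∫ ζ in y..x, f (x, ζ) * volterraPow f n (ζ, y)) =
      ∫ ζ in y..x, F (x, ζ) * volterraPow F n (ζ, y)
    apply intervalIntegral.integral_congr
    intro ζ hζ
    rw [Set.uIcc_of_le hyx] at hζ
    dsimp only
    have hζab : ζ ∈ Set.Icc a b := ⟨le_trans hy.1 hζ.1, le_trans hζ.2 hx.2⟩
    rw [hfF (x, ζ) ⟨Set.mem_Icc.2 hx, hζab⟩,
      ih (ζ, y) ⟨⟨hζab, Set.mem_Icc.2 hy⟩, hζ.1⟩]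

lemma volterra_pow_bound {a b : ℝ} {F : ℝ × ℝ → ℂ} (hF : Continuous F) {M : ℝ} (hM0 : 0 ≤ M)
    (hM : ∀ p ∈ Set.Icc a b ×ˢ Set.Icc a b, ‖F p‖ ≤ M) (n : ℕ) :
    ∀ p ∈ {p : ℝ × ℝ | p ∈ Set.Icc a b ×ˢ Set.Icc a b ∧ p.2 ≤ p.1},
      ‖volterraPow F n p‖ ≤ M ^ (n + 1) * (p.1 - p.2) ^ n / n.factorial := by
  induction n with
  | zero =>
    intro p hp
    simpa [volterraPow] using hM p hp.1
  | succ n ih =>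
    rintro ⟨x, y⟩ ⟨⟨hx, hy⟩, hyx⟩
    simp only [Set.mem_Icc] at hx hy
    show ‖∫ ζ in y..x, F (x, ζ) * volterraPow F n (ζ, y)‖ ≤ _
    have hcont : Continuous fun ζ : ℝ => F (x, ζ) * volterraPow F n (ζ, y) := by
      exact (hF.comp (by fun_prop)).mul ((volterra_cont_pow hF n).comp (by fun_prop))
    have key : (∫ ζ in y..x, ‖F (x, ζ) * volterraPow F n (ζ, y)‖) ≤
        ∫ ζ in y..x, M * (M ^ (n + 1) * (ζ - y) ^ n / n.factorial) := by
      apply intervalIntegral.integral_mono_on hyx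
      · exact Continuous.intervalIntegrable (continuous_norm.comp hcont) _ _
      · exact Continuous.intervalIntegrable (by fun_prop) _ _
      · intro ζ hζ
        have hζab : ζ ∈ Set.Icc a b := ⟨le_trans hy.1 hζ.1, le_trans hζ.2 hx.2⟩
        rw [norm_mul]
        have h1 : ‖F (x, ζ)‖ ≤ M := hM _ ⟨Set.mem_Icc.2 hx, hζab⟩
        have h2 : ‖volterraPow F n (ζ, y)‖ ≤
            M ^ (n + 1) * (ζ - y) ^ n / n.factorial :=
          ih (ζ, y) ⟨⟨hζab, Set.mem_Icc.2 hy⟩, hζ.1⟩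
        exact mul_le_mul h1 h2 (by positivity) hM0
    have hval : (∫ ζ in y..x, M * (M ^ (n + 1) * (ζ - y) ^ n / n.factorial)) =
        M ^ (n + 2) * (x - y) ^ (n + 1) / (n + 1).factorial := by
      have : (∫ ζ in y..x, ((ζ : ℝ) - y) ^ n) = (x - y) ^ (n + 1) / (n + 1) := by
        rw [intervalIntegral.integral_comp_sub_right (fun t => t ^ n) y]
        simp [integral_pow]
      rw [intervalIntegral.integral_const_mul]
      have h2 : (∫ ζ in y..x, M ^ (n + 1) * (ζ - y) ^ n / n.factorial) =
          (M ^ (n + 1) / n.factorial) * ∫ ζ in y..x, ((ζ : ℝ) - y) ^ n := by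
        rw [← intervalIntegral.integral_const_mul]
        congr 1; funext ζ; ring
      rw [h2, this, Nat.factorial_succ]
      have hnf : (n.factorial : ℝ) ≠ 0 := Nat.cast_ne_zero.2 n.factorial_ne_zero
      have hn1 : ((n : ℝ) + 1) ≠ 0 := by positivity
      field_simp
      push_cast
      ring
    calc ‖∫ ζ in y..x, F (x, ζ) * volterraPow F n (ζ, y)‖
        ≤ ∫ ζ in y..x, ‖F (x, ζ) * volterraPow F n (ζ, y)‖ := by
          simpa using
            intervalIntegral.norm_integral_le_integral_norm (f := fun ζ =>
              F (x, ζ) * volterraPow F n (ζ, y)) (μ := MeasureTheory.volume) hyx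
      _ ≤ ∫ ζ in y..x, M * (M ^ (n + 1) * (ζ - y) ^ n / n.factorial) := key
      _ = M ^ (n + 2) * (x - y) ^ (n + 1) / (n + 1).factorial := hval

/-- The Neumann series `∑_{n≥1} f^{∗n}` of iterated Volterra powers of a continuous
kernel converges absolutely and uniformly on `{(x,y) ∈ [a,b]² : y ≤ x}`. -/
theorem volterraNeumann_converges (a b : ℝ) (hab : a < b) (f : ℝ × ℝ → ℂ)
    (hf : ContinuousOn f (Set.Icc a b ×ˢ Set.Icc a b)) :
    (∀ p ∈ {p : ℝ × ℝ | p ∈ Set.Icc a b ×ˢ Set.Icc a b ∧ p.2 ≤ p.1},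
      Summable fun n : ℕ => ‖volterraPow f n p‖) ∧
    TendstoUniformlyOn (fun N : ℕ => fun p : ℝ × ℝ => ∑ n ∈ Finset.range N, volterraPow f n p)
      (fun p : ℝ × ℝ => ∑' n : ℕ, volterraPow f n p) Filter.atTop
      {p : ℝ × ℝ | p ∈ Set.Icc a b ×ˢ Set.Icc a b ∧ p.2 ≤ p.1} := by
  set s : Set (ℝ × ℝ) := Set.Icc a b ×ˢ Set.Icc a b with hs_def
  have hsc : IsClosed s := (isClosed_Icc.prod isClosed_Icc)
  -- Tietze extension of f to a global continuous function F
  obtain ⟨G, hG⟩ := ContinuousMap.exists_restrict_eq (Y := ℂ) hsc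
    ⟨s.restrict f, hf.restrict⟩
  set F : ℝ × ℝ → ℂ := ⇑G with hF_def
  have hFf : ∀ p ∈ s, f p = F p := by
    intro p hp
    have := congrFun (congrArg DFunLike.coe hG) ⟨p, hp⟩
    exact this.symm
  have hFc : Continuous F := G.continuous
  -- a bound on F over the square
  have hcomp : IsCompact s := (isCompact_Icc.prod isCompact_Icc)
  obtain ⟨C, hC⟩ := hcomp.exists_bound_of_continuousOn hFc.continuousOn
  set M : ℝ := max C 0 with hM_def
  have hM0 : (0 : ℝ) ≤ M := le_max_right _ _
  have hM : ∀ p ∈ s, ‖F p‖ ≤ M := fun p hp =>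
    le_trans (hC p hp) (le_max_left _ _)
  -- majorant series
  set u : ℕ → ℝ := fun n => M * ((M * (b - a)) ^ n / n.factorial) with hu_def
  have hu : Summable u := (Real.summable_pow_div_factorial (M * (b - a))).mul_left M
  have hbound : ∀ (n : ℕ), ∀ p ∈ {p : ℝ × ℝ | p ∈ s ∧ p.2 ≤ p.1},
      ‖volterraPow f n p‖ ≤ u n := by
    intro n p hp
    rw [volterra_pow_congr hFf n p hp]
    refine le_trans (volterra_pow_bound hFc hM0 hM n p hp) ?_
    obtain ⟨⟨hx, hy⟩, hyx⟩ := hp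
    simp only [Set.mem_Icc] at hx hy
    have h1 : (0 : ℝ) ≤ p.1 - p.2 := sub_nonneg.2 hyx
    have h2 : p.1 - p.2 ≤ b - a := by
      have := hx.2; have := hy.1; linarith
    have : M ^ (n + 1) * (p.1 - p.2) ^ n ≤ M * (M * (b - a)) ^ n := by
      rw [pow_succ', mul_pow, mul_assoc]
      gcongr
    calc M ^ (n + 1) * (p.1 - p.2) ^ n / n.factorial
        ≤ M * (M * (b - a)) ^ n / n.factorial := by gcongr
      _ = u n := by rw [hu_def]; simp [mul_div_assoc]
  constructor
  · intro p hp
    exact Summable.of_nonneg_of_le (fun n => norm_nonneg _)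
      (fun n => hbound n p hp) hu
  · exact tendstoUniformlyOn_tsum_nat hu fun n p hp =>
      le_trans (le_refl _) (hbound n p hp)
end

section
/- Let a < b be real numbers and let f : ℝ × ℝ → ℂ be continuous on [a,b] × [a,b]. Define G(x, y) := ∑_{n=1}^∞ f^{∗n}(x, y), the sum of the iterated Volterra powers. Then G is also a right ∗-resolvent of f: for all x, y ∈ [a,b] with y ≤ x, G(x, y) = f(x, y) + ∫_y^x G(x, ζ)·f(ζ, y) dζ. -/
open MeasureTheory Set intervalIntegral
open scoped ENNReal

section Aux


lemma volterraComp_continuous {g l : ℝ × ℝ → ℂ} (hg : Continuous g) (hl : Continuous l) :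
    Continuous (volterraComp g l) := by
  have hF : Continuous (Function.uncurry fun (p : ℝ × ℝ) (ζ : ℝ) => g (p.1, ζ) * l (ζ, p.2)) := by
    apply Continuous.mul
    · exact hg.comp (by fun_prop)
    · exact hl.comp (by fun_prop)
  have h1 : Continuous fun p : ℝ × ℝ => ∫ ζ in (0:ℝ)..p.1, g (p.1, ζ) * l (ζ, p.2) :=
    intervalIntegral.continuous_parametric_intervalIntegral_of_continuous hF continuous_fst
  have h2 : Continuous fun p : ℝ × ℝ => ∫ ζ in (0:ℝ)..p.2, g (p.1, ζ) * l (ζ, p.2) :=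
    intervalIntegral.continuous_parametric_intervalIntegral_of_continuous hF continuous_snd
  have : volterraComp g l = fun p : ℝ × ℝ =>
      (∫ ζ in (0:ℝ)..p.1, g (p.1, ζ) * l (ζ, p.2)) -
      (∫ ζ in (0:ℝ)..p.2, g (p.1, ζ) * l (ζ, p.2)) := by
    funext p
    rw [volterraComp, intervalIntegral.integral_interval_sub_left]
    · exact (Continuous.intervalIntegrable (by fun_prop) _ _)
    · exact (Continuous.intervalIntegrable (by fun_prop) _ _)
  rw [this]
  exact h1.sub h2

lemma volterraPow_continuous {g : ℝ × ℝ → ℂ} (hg : Continuous g) :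
    ∀ n, Continuous (volterraPow g n)
  | 0 => hg
  | n + 1 => volterraComp_continuous hg (volterraPow_continuous hg n)

/-- Fubini on the triangle `y ≤ s ≤ ζ ≤ x`. -/
lemma triangle_swap {F : ℝ × ℝ → ℂ} (hF : Continuous F) {x y : ℝ} (hyx : y ≤ x) :
    (∫ ζ in y..x, ∫ s in y..ζ, F (ζ, s)) = ∫ s in y..x, ∫ ζ in s..x, F (ζ, s) := by
  set T : Set (ℝ × ℝ) := {p | p.2 ≤ p.1} with hTdef
  have hT : MeasurableSet T := (isClosed_le continuous_snd continuous_fst).measurableSet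
  set H : ℝ × ℝ → ℂ := T.indicator F with hHdef
  set μ := volume.restrict (Ioc y x) with hμ
  haveI : IsFiniteMeasure μ := ⟨by
    rw [Measure.restrict_apply_univ]; exact measure_Ioc_lt_top⟩
  -- inner rewriting 1
  have key1 : ∀ ζ ∈ Ioc y x, (∫ s in y..ζ, F (ζ, s)) = ∫ s, H (ζ, s) ∂μ := by
    intro ζ hζ
    have h1 : (fun s => H (ζ, s)) = (Iic ζ).indicator (fun s => F (ζ, s)) := by
      funext s
      by_cases h : s ≤ ζ <;> simp [hHdef, hTdef, indicator, h]
    rw [h1, MeasureTheory.integral_indicator measurableSet_Iic, hμ, Measure.restrict_restrict measurableSet_Iic]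
    have : Iic ζ ∩ Ioc y x = Ioc y ζ := by
      ext s; simp only [mem_inter_iff, mem_Iic, mem_Ioc]
      exact ⟨fun h => ⟨h.2.1, h.1⟩, fun h => ⟨h.2, h.1, h.2.trans hζ.2⟩⟩
    rw [this, intervalIntegral.integral_of_le hζ.1.le]
  have key2 : ∀ s ∈ Ioc y x, (∫ ζ in s..x, F (ζ, s)) = ∫ ζ, H (ζ, s) ∂μ := by
    intro s hs
    have h1 : (fun ζ => H (ζ, s)) = (Ici s).indicator (fun ζ => F (ζ, s)) := by
      funext ζ
      by_cases h : s ≤ ζ <;> simp [hHdef, hTdef, indicator, h]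
    rw [h1, MeasureTheory.integral_indicator measurableSet_Ici, hμ, Measure.restrict_restrict measurableSet_Ici]
    have : Ici s ∩ Ioc y x = Icc s x := by
      ext ζ; simp only [mem_inter_iff, mem_Ici, mem_Icc, mem_Ioc]
      exact ⟨fun h => ⟨h.1, h.2.2⟩, fun h => ⟨h.1, hs.1.trans_le h.1, h.2⟩⟩
    rw [this, MeasureTheory.integral_Icc_eq_integral_Ioc, intervalIntegral.integral_of_le hs.2]
  -- integrability of H on the product
  obtain ⟨C, hC⟩ := (isCompact_Icc.prod isCompact_Icc).exists_bound_of_continuousOn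
    (s := Icc y x ×ˢ Icc y x) hF.continuousOn
  have hint : Integrable (fun p : ℝ × ℝ => H (p.1, p.2)) (μ.prod μ) := by
    have hmeas : AEStronglyMeasurable (fun p : ℝ × ℝ => H (p.1, p.2)) (μ.prod μ) := by
      have : (fun p : ℝ × ℝ => H (p.1, p.2)) = H := by funext p; rfl
      rw [this]
      exact (hF.stronglyMeasurable.indicator hT).aestronglyMeasurable
    refine Integrable.mono' (integrable_const C) hmeas ?_
    rw [hμ, Measure.prod_restrict, ae_restrict_iff' (measurableSet_Ioc.prod measurableSet_Ioc)]
    filter_upwards with p hp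
    have hp' : p ∈ Icc y x ×ˢ Icc y x := ⟨Ioc_subset_Icc_self hp.1, Ioc_subset_Icc_self hp.2⟩
    calc ‖H (p.1, p.2)‖ = ‖H p‖ := rfl
      _ ≤ ‖F p‖ := norm_indicator_le_norm_self F p
      _ ≤ C := hC p hp'
  rw [intervalIntegral.integral_of_le hyx, intervalIntegral.integral_of_le hyx]
  calc (∫ ζ in Ioc y x, ∫ s in y..ζ, F (ζ, s))
      = ∫ ζ, ∫ s, H (ζ, s) ∂μ ∂μ := setIntegral_congr_fun measurableSet_Ioc key1
    _ = ∫ s, ∫ ζ, H (ζ, s) ∂μ ∂μ := integral_integral_swap hint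
    _ = ∫ s in Ioc y x, ∫ ζ in s..x, F (ζ, s) :=
        (setIntegral_congr_fun measurableSet_Ioc key2).symm


end Aux

lemma volterraPow_norm_le {g : ℝ × ℝ → ℂ} {a b M : ℝ} (hM0 : 0 ≤ M)
    (hM : ∀ p ∈ Icc a b ×ˢ Icc a b, ‖g p‖ ≤ M) :
    ∀ n, ∀ x y : ℝ, a ≤ y → y ≤ x → x ≤ b →
      ‖volterraPow g n (x, y)‖ ≤ M ^ (n + 1) * (x - y) ^ n / n.factorial := by
  intro n
  induction n with
  | zero =>
    intro x y hay hyx hxb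
    simpa [volterraPow] using hM (x, y) ⟨⟨hay.trans hyx, hxb⟩, ⟨hay, hyx.trans hxb⟩⟩
  | succ n ih =>
    intro x y hay hyx hxb
    have hax : a ≤ x := hay.trans hyx
    have hyb : y ≤ b := hyx.trans hxb
    have hfac : (0:ℝ) < n.factorial := by positivity
    have hφint : IntervalIntegrable (fun ζ => M ^ (n + 2) * (ζ - y) ^ n / n.factorial)
        volume y x := (Continuous.intervalIntegrable (by fun_prop) _ _)
    have hbound : ‖volterraPow g (n + 1) (x, y)‖ ≤
        |∫ ζ in y..x, M ^ (n + 2) * (ζ - y) ^ n / n.factorial| := by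
      show ‖∫ ζ in y..x, g (x, ζ) * volterraPow g n (ζ, y)‖ ≤ _
      apply intervalIntegral.norm_integral_le_abs_of_norm_le _ hφint
      rw [uIoc_of_le hyx, ae_restrict_iff' measurableSet_Ioc]
      filter_upwards with ζ hζ
      rw [norm_mul]
      have h1 : ‖g (x, ζ)‖ * ‖volterraPow g n (ζ, y)‖ ≤
          M * (M ^ (n + 1) * (ζ - y) ^ n / n.factorial) :=
        mul_le_mul (hM (x, ζ) ⟨⟨hax, hxb⟩, ⟨hay.trans hζ.1.le, hζ.2.trans hxb⟩⟩)
          (ih ζ y hay hζ.1.le (hζ.2.trans hxb)) (norm_nonneg _) hM0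
      exact le_of_le_of_eq h1 (by ring)
    have h2 : (∫ ζ in y..x, ((ζ:ℝ) - y) ^ n) = (x - y) ^ (n + 1) / (n + 1) := by
      rw [intervalIntegral.integral_comp_sub_right (fun t => t ^ n) y, sub_self, integral_pow]
      simp
    have hval : (∫ ζ in y..x, M ^ (n + 2) * (ζ - y) ^ n / n.factorial)
        = M ^ (n + 2) * (x - y) ^ (n + 1) / (n + 1).factorial := by
      have : (∫ ζ in y..x, M ^ (n + 2) * (ζ - y) ^ n / n.factorial)
          = (M ^ (n + 2) / n.factorial) * ∫ ζ in y..x, ((ζ:ℝ) - y) ^ n := by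
        rw [← intervalIntegral.integral_const_mul]
        apply intervalIntegral.integral_congr
        intro ζ _; ring
      rw [this, h2, Nat.factorial_succ]
      have hn1 : ((n:ℝ) + 1) ≠ 0 := by positivity
      have hfn : ((n.factorial : ℝ)) ≠ 0 := ne_of_gt hfac
      push_cast
      rw [div_mul_div_comm, mul_comm ((n.factorial : ℝ)) _]
    refine hbound.trans (le_of_eq ?_)
    have hxy0 : (0:ℝ) ≤ x - y := sub_nonneg.2 hyx
    rw [hval, abs_of_nonneg (div_nonneg (mul_nonneg (pow_nonneg hM0 _) (pow_nonneg hxy0 _))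
      (by positivity))]



lemma volterraPow_succ_right {g : ℝ × ℝ → ℂ} (hg : Continuous g) :
    ∀ n, ∀ x y : ℝ, y ≤ x →
      volterraPow g (n + 1) (x, y) = ∫ ζ in y..x, volterraPow g n (x, ζ) * g (ζ, y) := by
  intro n
  induction n with
  | zero => intro x y _; rfl
  | succ n ih =>
    intro x y hyx
    have hPn : Continuous (volterraPow g n) := volterraPow_continuous hg n
    have hF : Continuous (fun p : ℝ × ℝ => g (x, p.1) * volterraPow g n p * g (p.2, y)) := by
      refine Continuous.mul (Continuous.mul ?_ hPn) ?_
      · exact hg.comp (continuous_const.prodMk continuous_fst)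
      · exact hg.comp (continuous_snd.prodMk continuous_const)
    have step1 : volterraPow g (n + 2) (x, y)
        = ∫ ζ in y..x, ∫ s in y..ζ, g (x, ζ) * volterraPow g n (ζ, s) * g (s, y) := by
      show (∫ ζ in y..x, g (x, ζ) * volterraPow g (n + 1) (ζ, y)) = _
      apply intervalIntegral.integral_congr
      intro ζ hζ
      rw [uIcc_of_le hyx] at hζ
      show g (x, ζ) * volterraPow g (n + 1) (ζ, y) = _
      rw [ih ζ y hζ.1, ← intervalIntegral.integral_const_mul]
      apply intervalIntegral.integral_congr
      intro s _
      show g (x, ζ) * (volterraPow g n (ζ, s) * g (s, y)) = _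
      ring
    have hsw : (∫ ζ in y..x, ∫ s in y..ζ, g (x, ζ) * volterraPow g n (ζ, s) * g (s, y))
        = ∫ s in y..x, ∫ ζ in s..x, g (x, ζ) * volterraPow g n (ζ, s) * g (s, y) :=
      triangle_swap hF hyx
    rw [step1, hsw]
    apply intervalIntegral.integral_congr
    intro s hs
    rw [uIcc_of_le hyx] at hs
    show (∫ ζ in s..x, g (x, ζ) * volterraPow g n (ζ, s) * g (s, y))
        = volterraPow g (n + 1) (x, s) * g (s, y)
    rw [show volterraPow g (n + 1) (x, s)
        = ∫ ζ in s..x, g (x, ζ) * volterraPow g n (ζ, s) from rfl,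
      ← intervalIntegral.integral_mul_const]


/-- The sum of the iterated Volterra powers is also a right ∗-resolvent of `f`. -/
theorem volterraNeumann_right_resolvent (a b : ℝ) (hab : a < b) (f : ℝ × ℝ → ℂ)
    (hf : ContinuousOn f (Set.Icc a b ×ˢ Set.Icc a b))
    (G : ℝ × ℝ → ℂ) (hG : G = fun p => ∑' n : ℕ, volterraPow f n p) :
    ∀ x ∈ Set.Icc a b, ∀ y ∈ Set.Icc a b, y ≤ x →
      G (x, y) = f (x, y) + ∫ ζ in y..x, G (x, ζ) * f (ζ, y) := by
  intro x hx y hy hyx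
  -- Tietze extension of f to a globally continuous g
  have hS : IsClosed (Icc a b ×ˢ Icc a b) := isClosed_Icc.prod isClosed_Icc
  obtain ⟨g', hg'⟩ := ContinuousMap.exists_restrict_eq (Y := ℂ) hS ⟨_, hf.restrict⟩
  set g : ℝ × ℝ → ℂ := ⇑g' with hgdef
  have hg : Continuous g := g'.continuous
  have hgf : ∀ p ∈ Icc a b ×ˢ Icc a b, g p = f p := by
    intro p hp
    have h := DFunLike.congr_fun hg' (⟨p, hp⟩ : (Icc a b ×ˢ Icc a b : Set (ℝ × ℝ)))
    simpa using h
  -- the powers of f and g agree on the triangle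
  have hpow : ∀ n, ∀ x' ∈ Icc a b, ∀ y' ∈ Icc a b, y' ≤ x' →
      volterraPow f n (x', y') = volterraPow g n (x', y') := by
    intro n
    induction n with
    | zero => intro x' hx' y' hy' _; exact (hgf (x', y') ⟨hx', hy'⟩).symm
    | succ n ih =>
      intro x' hx' y' hy' hle
      show (∫ ζ in y'..x', f (x', ζ) * volterraPow f n (ζ, y'))
        = ∫ ζ in y'..x', g (x', ζ) * volterraPow g n (ζ, y')
      apply intervalIntegral.integral_congr
      intro ζ hζ
      rw [uIcc_of_le hle] at hζ
      have hζab : ζ ∈ Icc a b := ⟨hy'.1.trans hζ.1, hζ.2.trans hx'.2⟩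
      show f (x', ζ) * volterraPow f n (ζ, y') = g (x', ζ) * volterraPow g n (ζ, y')
      rw [← hgf (x', ζ) ⟨hx', hζab⟩, ih ζ hζab y' hy' hζ.1]
  -- uniform bound
  obtain ⟨M₀, hM₀⟩ := (isCompact_Icc.prod isCompact_Icc).exists_bound_of_continuousOn
    (s := Icc a b ×ˢ Icc a b) hg.continuousOn
  set M := max M₀ 0 with hM
  have hM0 : 0 ≤ M := le_max_right _ _
  have hMb : ∀ p ∈ Icc a b ×ˢ Icc a b, ‖g p‖ ≤ M := fun p hp => (hM₀ p hp).trans (le_max_left _ _)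
  have hba : (0:ℝ) ≤ b - a := by linarith
  set u : ℕ → ℝ := fun n => M ^ (n + 1) * (b - a) ^ n / n.factorial with hu
  have hu0 : ∀ n, 0 ≤ u n := fun n => by
    apply div_nonneg (mul_nonneg (pow_nonneg hM0 _) (pow_nonneg hba _)) (by positivity)
  have husum : Summable u := by
    refine ((Real.summable_pow_div_factorial (M * (b - a))).mul_left M).congr fun n => ?_
    simp only [hu, mul_pow]
    ring
  have hb' : ∀ n, ∀ x' y' : ℝ, a ≤ y' → y' ≤ x' → x' ≤ b → ‖volterraPow g n (x', y')‖ ≤ u n := by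
    intro n x' y' h1 h2 h3
    refine (volterraPow_norm_le hM0 hMb n x' y' h1 h2 h3).trans ?_
    have hxy : x' - y' ≤ b - a := by linarith
    have h0 : (0:ℝ) ≤ x' - y' := by linarith
    have hpw : (x' - y') ^ n ≤ (b - a) ^ n := pow_le_pow_left₀ h0 hxy n
    exact div_le_div₀ (mul_nonneg (pow_nonneg hM0 _) (pow_nonneg hba _))
      (mul_le_mul_of_nonneg_left hpw (pow_nonneg hM0 _)) (by positivity) le_rfl
  have hsum : ∀ t ∈ Icc y x, Summable fun n => volterraPow g n (x, t) := fun t ht =>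
    Summable.of_norm_bounded husum fun n => hb' n x t (hy.1.trans ht.1) ht.2 hx.2
  have hGg : ∀ t ∈ Icc y x, G (x, t) = ∑' n, volterraPow g n (x, t) := by
    intro t ht
    rw [hG]
    exact tsum_congr fun n => hpow n x hx t ⟨hy.1.trans ht.1, ht.2.trans hx.2⟩ ht.2
  rw [hGg y ⟨le_rfl, hyx⟩, Summable.tsum_eq_zero_add (hsum y ⟨le_rfl, hyx⟩)]
  congr 1
  · exact hgf (x, y) ⟨hx, hy⟩
  -- the tail
  have hmeas : ∀ n : ℕ, AEStronglyMeasurable (fun ζ => volterraPow g n (x, ζ) * g (ζ, y))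
      (volume.restrict (Ioc y x)) := fun n =>
    (((volterraPow_continuous hg n).comp (continuous_const.prodMk continuous_id)).mul
      (hg.comp (continuous_id.prodMk continuous_const))).aestronglyMeasurable.restrict
  have hlb : ∀ n : ℕ, (∫⁻ ζ in Ioc y x, ‖volterraPow g n (x, ζ) * g (ζ, y)‖₊)
      ≤ ENNReal.ofReal (u n * M * (b - a)) := by
    intro n
    have hptw : ∀ ζ ∈ Ioc y x, (‖volterraPow g n (x, ζ) * g (ζ, y)‖₊ : ℝ≥0∞)
        ≤ ENNReal.ofReal (u n * M) := by
      intro ζ hζ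
      rw [← enorm_eq_nnnorm, ← ofReal_norm]
      apply ENNReal.ofReal_le_ofReal
      rw [norm_mul]
      exact mul_le_mul (hb' n x ζ (hy.1.trans hζ.1.le) hζ.2 hx.2)
        (hMb (ζ, y) ⟨⟨hy.1.trans hζ.1.le, hζ.2.trans hx.2⟩, hy⟩) (norm_nonneg _) (hu0 n)
    calc (∫⁻ ζ in Ioc y x, ‖volterraPow g n (x, ζ) * g (ζ, y)‖₊)
        ≤ ∫⁻ _ζ in Ioc y x, ENNReal.ofReal (u n * M) := setLIntegral_mono measurable_const hptw
      _ = ENNReal.ofReal (u n * M) * volume (Ioc y x) := by rw [setLIntegral_const]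
      _ ≤ ENNReal.ofReal (u n * M) * ENNReal.ofReal (b - a) := by
          rw [Real.volume_Ioc]
          exact mul_le_mul_right (ENNReal.ofReal_le_ofReal (by linarith [hx.2, hy.1])) _
      _ = ENNReal.ofReal (u n * M * (b - a)) :=
          (ENNReal.ofReal_mul (mul_nonneg (hu0 n) hM0)).symm
  have hlint : (∑' n : ℕ, ∫⁻ ζ in Ioc y x, ‖volterraPow g n (x, ζ) * g (ζ, y)‖₊) ≠ ⊤ := by
    apply ne_of_lt
    calc (∑' n : ℕ, ∫⁻ ζ in Ioc y x, ‖volterraPow g n (x, ζ) * g (ζ, y)‖₊)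
        ≤ ∑' n : ℕ, ENNReal.ofReal (u n * M * (b - a)) := ENNReal.tsum_le_tsum hlb
      _ < ⊤ := by
          have hs : Summable fun n => u n * M * (b - a) :=
            (husum.mul_right M).mul_right (b - a)
          rw [← ENNReal.ofReal_tsum_of_nonneg (fun n => by positivity) hs]
          exact ENNReal.ofReal_lt_top
  calc (∑' n : ℕ, volterraPow g (n + 1) (x, y))
      = ∑' n : ℕ, ∫ ζ in Ioc y x, volterraPow g n (x, ζ) * g (ζ, y) := by
        refine tsum_congr fun n => ?_
        rw [volterraPow_succ_right hg n x y hyx, intervalIntegral.integral_of_le hyx]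
    _ = ∫ ζ in Ioc y x, ∑' n : ℕ, volterraPow g n (x, ζ) * g (ζ, y) :=
        (integral_tsum hmeas hlint).symm
    _ = ∫ ζ in Ioc y x, G (x, ζ) * f (ζ, y) := by
        refine setIntegral_congr_fun measurableSet_Ioc fun ζ hζ => ?_
        have hζ' : ζ ∈ Icc y x := Ioc_subset_Icc_self hζ
        rw [tsum_mul_right, ← hGg ζ hζ',
          hgf (ζ, y) ⟨⟨hy.1.trans hζ'.1, hζ'.2.trans hx.2⟩, hy⟩]
    _ = ∫ ζ in y..x, G (x, ζ) * f (ζ, y) := (intervalIntegral.integral_of_le hyx).symm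
end

section
/- Let a < b be real numbers and let f : ℝ × ℝ → ℂ be continuous on [a,b] × [a,b]. For each N ≥ 1 set Δz := (b − a)/N and grid points z_k := a + kΔz for k = 0, …, N, and let F_N be the (N+1) × (N+1) complex matrix with (F_N)_{ij} := f(z_i, z_j) if i ≥ j and 0 otherwise. Then for all N sufficiently large the matrix Id − Δz·F_N is invertible, and the (N, 0) entry satisfies lim_{N→∞} (1/Δz) · ((Id − Δz·F_N)^{-1} − Id)_{N,0} = ∑_{n=1}^∞ f^{∗n}(b, a), the sum of the iterated Volterra powers evaluated at (b, a). -/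
/-- The lower-triangular sample matrix of a kernel `f` on the uniform grid
`z_k = a + k (b-a)/N`, `k = 0, …, N`. -/
noncomputable def gridF (a b : ℝ) (f : ℝ × ℝ → ℂ) (N : ℕ) :
    Matrix (Fin (N + 1)) (Fin (N + 1)) ℂ := fun i j =>
  if (j : ℕ) ≤ (i : ℕ) then
    f (a + ((i : ℕ) : ℝ) * ((b - a) / N), a + ((j : ℕ) : ℝ) * ((b - a) / N)) else 0

open Filter Finset

namespace VoltAux


/-- grid point -/
noncomputable def z (a b : ℝ) (N k : ℕ) : ℝ := a + k * ((b - a) / N)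

/-- discrete kernel, ℕ-indexed -/
noncomputable def Fd (a b : ℝ) (f : ℝ × ℝ → ℂ) (N i j : ℕ) : ℂ :=
  if j ≤ i then f (z a b N i, z a b N j) else 0

/-- scaled-free discrete iterated kernels: `Gd n = F^{n+1}` entries -/
noncomputable def Gd (a b : ℝ) (f : ℝ × ℝ → ℂ) (N : ℕ) : ℕ → ℕ → ℕ → ℂ
  | 0 => fun i j => Fd a b f N i j
  | n + 1 => fun i j => ∑ k ∈ Finset.Icc j i, Fd a b f N i k * Gd a b f N n k j

variable (a b : ℝ) (f : ℝ × ℝ → ℂ)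

theorem Gd_tri (N n i j : ℕ) (h : i < j) : Gd a b f N n i j = 0 := by
  cases n with
  | zero => simp [Gd, Fd, Nat.not_le.2 h]
  | succ n =>
    simp only [Gd]
    rw [Finset.Icc_eq_empty (by omega), Finset.sum_empty]

noncomputable def gridF' (a b : ℝ) (f : ℝ × ℝ → ℂ) (N : ℕ) :
    Matrix (Fin (N + 1)) (Fin (N + 1)) ℂ := fun i j => Fd a b f N i j

theorem gridF_pow (N n : ℕ) (i j : Fin (N + 1)) :
    ((gridF' a b f N) ^ (n + 1)) i j = Gd a b f N n (i : ℕ) (j : ℕ) := by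
  induction n generalizing i j with
  | zero => rw [pow_one]; rfl
  | succ n ih =>
    rw [pow_succ', Matrix.mul_apply]
    have h1 : ∀ k : Fin (N + 1), gridF' a b f N i k * (gridF' a b f N ^ (n + 1)) k j
        = Fd a b f N i k * Gd a b f N n k j := by
      intro k; rw [ih]; rfl
    simp only [h1]
    rw [Fin.sum_univ_eq_sum_range (fun k => Fd a b f N (i : ℕ) k * Gd a b f N n k (j : ℕ))]
    rw [show (Gd a b f N (n + 1) (i : ℕ) (j : ℕ)) =
      ∑ k ∈ Finset.Icc (j : ℕ) (i : ℕ), Fd a b f N i k * Gd a b f N n k j from rfl]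
    refine (Finset.sum_subset ?_ ?_).symm
    · intro k hk
      rw [Finset.mem_Icc] at hk
      exact Finset.mem_range.2 (lt_of_le_of_lt hk.2 i.isLt)
    · intro k _ hk
      rw [Finset.mem_Icc] at hk
      push_neg at hk
      by_cases hkj : (j : ℕ) ≤ k
      · rw [Fd, if_neg (by exact_mod_cast Nat.not_le.2 (hk hkj)), zero_mul]
      · rw [Gd_tri a b f N n k j (Nat.not_le.1 hkj), mul_zero]

theorem Gd_bound (M : ℝ) (hM : ∀ p, ‖f p‖ ≤ M) (N n i j : ℕ) (hji : j ≤ i) :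
    ‖Gd a b f N n i j‖ ≤ M ^ (n + 1) * ((i - j + n).choose n : ℝ) := by
  have hM0 : 0 ≤ M := le_trans (norm_nonneg _) (hM (0, 0))
  induction n generalizing i j with
  | zero =>
    simp only [Gd, Fd, if_pos hji, Nat.choose_zero_right, Nat.cast_one, mul_one, zero_add,
      pow_one]
    exact hM _
  | succ n ih =>
    simp only [Gd]
    calc ‖∑ k ∈ Finset.Icc j i, Fd a b f N i k * Gd a b f N n k j‖
        ≤ ∑ k ∈ Finset.Icc j i, ‖Fd a b f N i k * Gd a b f N n k j‖ := norm_sum_le _ _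
      _ ≤ ∑ k ∈ Finset.Icc j i, M * (M ^ (n + 1) * ((k - j + n).choose n : ℝ)) := by
          refine Finset.sum_le_sum fun k hk => ?_
          rw [Finset.mem_Icc] at hk
          rw [norm_mul]
          have h1 : ‖Fd a b f N i k‖ ≤ M := by
            rw [Fd]; split
            · exact hM _
            · simpa using hM0
          exact mul_le_mul h1 (ih k j hk.1) (norm_nonneg _)
            hM0
      _ = M ^ (n + 2) * ((i - j + (n + 1)).choose (n + 1) : ℝ) := by
          have hterm : ∀ k : ℕ, M * (M ^ (n + 1) * ((k - j + n).choose n : ℝ))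
              = M ^ (n + 2) * ((k - j + n).choose n : ℝ) := fun k => by ring
          simp only [hterm]
          rw [← Finset.mul_sum]
          congr 1
          rw [← Nat.cast_sum]
          congr 1
          have h1 : ∑ k ∈ Finset.Icc j i, (k - j + n).choose n
              = ∑ d ∈ Finset.range (i + 1 - j), (d + n).choose n := by
            rw [← Finset.Ico_add_one_right_eq_Icc, Finset.sum_Ico_eq_sum_range]
            exact Finset.sum_congr rfl fun d _ => by rw [show j + d - j = d by omega]
          have h2 : ∑ m ∈ Finset.Icc n (i - j + n), m.choose n
              = ∑ d ∈ Finset.range (i + 1 - j), (d + n).choose n := by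
            rw [← Finset.Ico_add_one_right_eq_Icc, Finset.sum_Ico_eq_sum_range,
              show i - j + n + 1 - n = i + 1 - j by omega]
            exact Finset.sum_congr rfl fun d _ => by rw [Nat.add_comm n d]
          rw [h1, ← h2, Nat.sum_Icc_choose, show i - j + n + 1 = i - j + (n + 1) by omega]




theorem z_zero (a b : ℝ) (N : ℕ) : z a b N 0 = a := by simp [z]

theorem z_last (a b : ℝ) {N : ℕ} (hN : N ≠ 0) : z a b N N = b := by
  rw [z, mul_div_cancel₀ _ (by exact_mod_cast hN)]; ring

theorem z_succ (a b : ℝ) (N k : ℕ) : z a b N (k + 1) = z a b N k + (b - a) / N := by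
  simp only [z]; push_cast; ring

theorem z_mem (a b : ℝ) (hab : a ≤ b) {N k : ℕ} (hk : k ≤ N) :
    z a b N k ∈ Set.Icc a b := by
  rcases Nat.eq_zero_or_pos N with h | h
  · subst h
    interval_cases k
    simp [z, hab]
  · have hΔ : (0:ℝ) ≤ (b - a) / N := div_nonneg (by linarith) (Nat.cast_nonneg N)
    constructor
    · rw [z]; nlinarith [mul_nonneg (Nat.cast_nonneg (α := ℝ) k) hΔ]
    · have h1 : (k : ℝ) * ((b - a) / N) ≤ (N : ℝ) * ((b - a) / N) := by
        apply mul_le_mul_of_nonneg_right _ hΔ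
        exact_mod_cast hk
      rw [z]
      rw [mul_div_cancel₀ _ (by exact_mod_cast h.ne' : (N:ℝ) ≠ 0)] at h1
      linarith

theorem z_mono (a b : ℝ) (hab : a ≤ b) (N : ℕ) {k l : ℕ} (h : k ≤ l) :
    z a b N k ≤ z a b N l := by
  have hΔ : (0:ℝ) ≤ (b - a) / N := div_nonneg (by linarith) (Nat.cast_nonneg N)
  simp only [z]
  have : (k:ℝ) ≤ (l:ℝ) := by exact_mod_cast h
  nlinarith

variable {f : ℝ × ℝ → ℂ}

theorem vpow_cont (hf : Continuous f) (n : ℕ) : Continuous (volterraPow f n) := by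
  induction n with
  | zero => exact hf
  | succ n ih =>
    have hH : Continuous (Function.uncurry
        (fun (p : ℝ × ℝ) (ζ : ℝ) => f (p.1, ζ) * volterraPow f n (ζ, p.2))) := by
      apply Continuous.mul
      · exact hf.comp (by fun_prop)
      · exact ih.comp (by fun_prop)
    have h1 : Continuous fun p : ℝ × ℝ => ∫ ζ in (0:ℝ)..p.1,
        f (p.1, ζ) * volterraPow f n (ζ, p.2) :=
      intervalIntegral.continuous_parametric_intervalIntegral_of_continuous hH continuous_fst
    have h2 : Continuous fun p : ℝ × ℝ => ∫ ζ in (0:ℝ)..p.2,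
        f (p.1, ζ) * volterraPow f n (ζ, p.2) :=
      intervalIntegral.continuous_parametric_intervalIntegral_of_continuous hH continuous_snd
    have heq : ∀ p : ℝ × ℝ, volterraPow f (n + 1) p
        = (∫ ζ in (0:ℝ)..p.1, f (p.1, ζ) * volterraPow f n (ζ, p.2))
          - ∫ ζ in (0:ℝ)..p.2, f (p.1, ζ) * volterraPow f n (ζ, p.2) := by
      intro p
      have hint : ∀ u v : ℝ, IntervalIntegrable
          (fun ζ => f (p.1, ζ) * volterraPow f n (ζ, p.2)) MeasureTheory.volume u v := by
        intro u v
        apply Continuous.intervalIntegrable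
        exact (hf.comp (by fun_prop)).mul (ih.comp (by fun_prop))
      rw [show volterraPow f (n+1) p = ∫ ζ in p.2..p.1,
        f (p.1, ζ) * volterraPow f n (ζ, p.2) from rfl]
      rw [intervalIntegral.integral_interval_sub_left (hint 0 p.1) (hint 0 p.2)]
    have : volterraPow f (n + 1) = fun p : ℝ × ℝ =>
        (∫ ζ in (0:ℝ)..p.1, f (p.1, ζ) * volterraPow f n (ζ, p.2))
          - ∫ ζ in (0:ℝ)..p.2, f (p.1, ζ) * volterraPow f n (ζ, p.2) := funext heq
    rw [this]
    exact h1.sub h2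

theorem vpow_bound (hf : Continuous f) {M : ℝ} (hM : ∀ p, ‖f p‖ ≤ M) (n : ℕ) (x y : ℝ) :
    ‖volterraPow f n (x, y)‖ ≤ M ^ (n + 1) * |x - y| ^ n := by
  have hM0 : 0 ≤ M := le_trans (norm_nonneg _) (hM (0, 0))
  induction n generalizing x y with
  | zero => simpa [volterraPow] using hM (x, y)
  | succ n ih =>
    have hb : ∀ ζ ∈ Set.uIoc y x, ‖f (x, ζ) * volterraPow f n (ζ, y)‖
        ≤ M ^ (n + 2) * |x - y| ^ n := by
      intro ζ hζ
      rw [norm_mul]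
      have h1 : |ζ - y| ≤ |x - y| := by
        have hm : min y x < ζ := hζ.1
        have hM' : ζ ≤ max y x := hζ.2
        rcases le_total y x with h | h
        · rw [min_eq_left h] at hm
          rw [max_eq_right h] at hM'
          rw [abs_of_nonneg (by linarith), abs_of_nonneg (by linarith)]
          linarith
        · rw [min_eq_right h] at hm
          rw [max_eq_left h] at hM'
          rw [abs_of_nonpos (by linarith), abs_of_nonpos (by linarith)]
          linarith
      calc ‖f (x, ζ)‖ * ‖volterraPow f n (ζ, y)‖
          ≤ M * (M ^ (n + 1) * |ζ - y| ^ n) :=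
            mul_le_mul (hM _) (ih ζ y) (norm_nonneg _) hM0
        _ ≤ M * (M ^ (n + 1) * |x - y| ^ n) := by gcongr
        _ = M ^ (n + 2) * |x - y| ^ n := by ring
    calc ‖volterraPow f (n+1) (x, y)‖
        = ‖∫ ζ in y..x, f (x, ζ) * volterraPow f n (ζ, y)‖ := rfl
      _ ≤ M ^ (n + 2) * |x - y| ^ n * |x - y| :=
          intervalIntegral.norm_integral_le_of_norm_le_const hb
      _ = M ^ (n + 1 + 1) * |x - y| ^ (n + 1) := by ring


theorem keyP (a b : ℝ) (hab : a < b) {f : ℝ × ℝ → ℂ} (hf : Continuous f)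
    {M : ℝ} (hM : ∀ p, ‖f p‖ ≤ M) (n : ℕ) :
    ∀ ε > 0, ∀ᶠ N : ℕ in Filter.atTop, ∀ i j : ℕ, j ≤ i → i ≤ N →
      ‖(((b - a) / N : ℝ) : ℂ) ^ n * Gd a b f N n i j
        - volterraPow f n (z a b N i, z a b N j)‖ ≤ ε := by
  have hM0 : 0 ≤ M := le_trans (norm_nonneg _) (hM (0, 0))
  have hr : (0:ℝ) < b - a := by linarith
  induction n with
  | zero =>
    intro ε hε
    filter_upwards with N i j hji hiN
    simp only [pow_zero, one_mul]
    rw [show Gd a b f N 0 i j = Fd a b f N i j from rfl, Fd, if_pos hji,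
      show volterraPow f 0 = f from rfl, sub_self, norm_zero]
    exact hε.le
  | succ n ih =>
    intro ε hε
    set g := volterraPow f n with hgdef
    have hgc : Continuous g := vpow_cont hf n
    set B := M ^ (n + 1) * (b - a) ^ n with hBdef
    have hB0 : 0 ≤ B := by positivity
    have hgB : ∀ x y : ℝ, x ∈ Set.Icc a b → y ∈ Set.Icc a b → ‖g (x, y)‖ ≤ B := by
      intro x y hx hy
      refine (vpow_bound hf hM n x y).trans ?_
      rw [hBdef]
      have : |x - y| ≤ b - a := by
        rw [abs_le]; constructor <;> [linarith [hx.1, hx.2, hy.1, hy.2];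
          linarith [hx.1, hx.2, hy.1, hy.2]]
      gcongr
    set H : ℝ × ℝ × ℝ → ℂ := fun p => f (p.1, p.2.1) * g (p.2.1, p.2.2) with hHdef
    have hHc : Continuous H := by
      apply Continuous.mul
      · exact hf.comp (by fun_prop)
      · exact hgc.comp (by fun_prop)
    set cube : Set (ℝ × ℝ × ℝ) := Set.Icc a b ×ˢ (Set.Icc a b ×ˢ Set.Icc a b) with hcubedef
    have hcube : IsCompact cube := isCompact_Icc.prod (isCompact_Icc.prod isCompact_Icc)
    have hUC := hcube.uniformContinuousOn_of_continuous hHc.continuousOn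
    set ε₁ := ε / (3 * (b - a + 1)) with hε₁def
    have hε₁0 : 0 < ε₁ := by rw [hε₁def]; positivity
    obtain ⟨δ, hδ0, hδ⟩ := Metric.uniformContinuousOn_iff.1 hUC ε₁ hε₁0
    set ε₂ := ε / (3 * (b - a + 1) * (M + 1)) with hε₂def
    have hε₂0 : 0 < ε₂ := by rw [hε₂def]; positivity
    have hΔ0 : Tendsto (fun N : ℕ => (b - a) / N) atTop (nhds 0) :=
      tendsto_const_div_atTop_nhds_zero_nat _
    have E2 : ∀ᶠ N : ℕ in atTop, (b - a) / N < δ := hΔ0.eventually_lt_const hδ0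
    have E3 : ∀ᶠ N : ℕ in atTop, (b - a) / N ≤ 1 := hΔ0.eventually_le_const one_pos
    have E4 : ∀ᶠ N : ℕ in atTop, M * B * ((b - a) / N) ≤ ε / 3 := by
      have h := hΔ0.const_mul (M * B)
      rw [mul_zero] at h
      exact h.eventually_le_const (by positivity)
    filter_upwards [ih ε₂ hε₂0, E2, E3, E4, Filter.eventually_ge_atTop 1]
      with N hIH hδN h1N hMB hN1
    intro i j hji hiN
    have hNpos : (0:ℝ) < N := by exact_mod_cast hN1
    set Δ : ℝ := (b - a) / N with hΔdef
    have hΔpos : 0 < Δ := div_pos hr hNpos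
    have hNΔ : (N:ℝ) * Δ = b - a := by
      rw [hΔdef, mul_div_cancel₀ _ (ne_of_gt hNpos)]
    set Δc : ℂ := ((Δ : ℝ) : ℂ) with hΔcdef
    have hΔcnorm : ‖Δc‖ = Δ := by
      rw [hΔcdef, Complex.norm_real, Real.norm_eq_abs, abs_of_pos hΔpos]
    set zz : ℕ → ℝ := z a b N with hzzdef
    have hzm : ∀ k, k ≤ N → zz k ∈ Set.Icc a b := fun k hk => z_mem a b hab.le hk
    have hcont : ∀ i' : ℕ, Continuous fun ζ => f (zz i', ζ) * g (ζ, zz j) := by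
      intro i'
      exact (hf.comp (by fun_prop)).mul (hgc.comp (by fun_prop))
    have hint : ∀ (i' : ℕ) (u v : ℝ),
        IntervalIntegrable (fun ζ => f (zz i', ζ) * g (ζ, zz j))
          MeasureTheory.volume u v := fun i' u v => (hcont i').intervalIntegrable u v
    set q : ℕ → ℂ := fun k => Δc * (f (zz i, zz k) * g (zz k, zz j)) with hqdef
    -- rewrite the discrete side as a sum
    have hGd : Δc ^ (n + 1) * Gd a b f N (n + 1) i j
        = ∑ k ∈ Finset.Icc j i, Δc ^ (n + 1) * (Fd a b f N i k * Gd a b f N n k j) := by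
      rw [show Gd a b f N (n + 1) i j
        = ∑ k ∈ Finset.Icc j i, Fd a b f N i k * Gd a b f N n k j from rfl, Finset.mul_sum]
    -- Step A
    have stepA : ‖∑ k ∈ Finset.Icc j i, Δc ^ (n + 1) * (Fd a b f N i k * Gd a b f N n k j)
        - ∑ k ∈ Finset.Icc j i, q k‖ ≤ ε / 3 := by
      rw [← Finset.sum_sub_distrib]
      refine le_trans (norm_sum_le _ _) ?_
      have hterm : ∀ k ∈ Finset.Icc j i,
          ‖Δc ^ (n + 1) * (Fd a b f N i k * Gd a b f N n k j) - q k‖ ≤ Δ * M * ε₂ := by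
        intro k hk
        rw [Finset.mem_Icc] at hk
        have hFd : Fd a b f N i k = f (zz i, zz k) := by
          rw [Fd, if_pos hk.2]
        have heq : Δc ^ (n + 1) * (Fd a b f N i k * Gd a b f N n k j) - q k
            = Δc * f (zz i, zz k) * (Δc ^ n * Gd a b f N n k j - g (zz k, zz j)) := by
          rw [hFd, hqdef]; ring
        rw [heq, norm_mul, norm_mul, hΔcnorm]
        have h2 := hIH k j hk.1 (le_trans hk.2 hiN)
        have hb1 : Δ * ‖f (zz i, zz k)‖ ≤ Δ * M := mul_le_mul_of_nonneg_left (hM _) hΔpos.le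
        exact mul_le_mul hb1 h2 (norm_nonneg _) (by positivity)
      refine le_trans (Finset.sum_le_sum hterm) ?_
      rw [Finset.sum_const, Nat.card_Icc, nsmul_eq_mul]
      have hcard : ((i + 1 - j : ℕ) : ℝ) ≤ (N : ℝ) + 1 := by
        have : i + 1 - j ≤ N + 1 := by omega
        exact_mod_cast this
      have h3 : ((i + 1 - j : ℕ) : ℝ) * (Δ * M * ε₂) ≤ ((N : ℝ) + 1) * (Δ * M * ε₂) := by
        exact mul_le_mul_of_nonneg_right hcard (by positivity)
      refine h3.trans ?_
      have h4 : ((N : ℝ) + 1) * Δ ≤ b - a + 1 := by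
        rw [add_mul, hNΔ, one_mul]
        linarith
      have h5 : ((N : ℝ) + 1) * (Δ * M * ε₂) = (((N : ℝ) + 1) * Δ) * (M * ε₂) := by ring
      rw [h5]
      refine le_trans (mul_le_mul_of_nonneg_right h4 (by positivity)) ?_
      have e1 : (b - a + 1) * (M * ε₂) = (ε / 3) * (M / (M + 1)) := by
        rw [hε₂def]; field_simp
      rw [e1]
      exact mul_le_of_le_one_right (by positivity)
        (by rw [div_le_one (by linarith)]; linarith)
    -- Step B
    have hImem : i ≤ N := hiN
    have stepB : ‖(∑ k ∈ Finset.Icc j i, q k)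
        - volterraPow f (n + 1) (zz i, zz j)‖ ≤ ε / 3 + ε / 3 := by
      -- split off the top endpoint
      have hsplit : ∑ k ∈ Finset.Icc j i, q k
          = (∑ d ∈ Finset.range (i - j), q (j + d)) + q i := by
        rw [← Finset.Ico_add_one_right_eq_Icc, Finset.sum_Ico_succ_top hji, Finset.sum_Ico_eq_sum_range]
      -- integral as sum of cell integrals
      have hintsum : volterraPow f (n + 1) (zz i, zz j)
          = ∑ d ∈ Finset.range (i - j),
              ∫ ζ in zz (j + d)..zz (j + d + 1), f (zz i, ζ) * g (ζ, zz j) := by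
        have h := intervalIntegral.sum_integral_adjacent_intervals
          (μ := MeasureTheory.volume) (a := fun d => zz (j + d)) (n := i - j)
          (fun k _ => hint i _ _)
        simp only [Nat.add_zero, Nat.add_sub_cancel' hji] at h
        rw [show volterraPow f (n + 1) (zz i, zz j)
          = ∫ ζ in zz j..zz i, f (zz i, ζ) * g (ζ, zz j) from rfl, ← h]
        exact Finset.sum_congr rfl fun d _ => by rw [← Nat.add_assoc]
      rw [hsplit, hintsum]
      have htr : (∑ d ∈ Finset.range (i - j), q (j + d)) + q i
            - ∑ d ∈ Finset.range (i - j),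
              (∫ ζ in zz (j + d)..zz (j + d + 1), f (zz i, ζ) * g (ζ, zz j))
          = (∑ d ∈ Finset.range (i - j), (q (j + d)
            - ∫ ζ in zz (j + d)..zz (j + d + 1), f (zz i, ζ) * g (ζ, zz j))) + q i := by
        rw [Finset.sum_sub_distrib]; ring
      rw [htr]
      refine le_trans (norm_add_le _ _) (add_le_add ?_ ?_)
      · -- Riemann cell errors
        refine le_trans (norm_sum_le _ _) ?_
        have hcell : ∀ d ∈ Finset.range (i - j),
            ‖q (j + d) - ∫ ζ in zz (j + d)..zz (j + d + 1), f (zz i, ζ) * g (ζ, zz j)‖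
              ≤ ε₁ * Δ := by
          intro d hd
          rw [Finset.mem_range] at hd
          set k := j + d with hkdef
          have hkN : k + 1 ≤ N := by omega
          have hzk : zz (k + 1) - zz k = Δ := by
            rw [hzzdef, z_succ]; ring
          have hmono : zz k ≤ zz (k + 1) := z_mono a b hab.le N (Nat.le_succ k)
          -- q k as a constant integral
          have hqint : q k = ∫ _ in zz k..zz (k + 1), f (zz i, zz k) * g (zz k, zz j) := by
            rw [intervalIntegral.integral_const, hzk, Complex.real_smul, hqdef]
          rw [hqint, ← intervalIntegral.integral_sub (by
              exact intervalIntegrable_const) (hint i _ _)]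
          have hbound : ∀ ζ ∈ Set.uIoc (zz k) (zz (k + 1)),
              ‖f (zz i, zz k) * g (zz k, zz j) - f (zz i, ζ) * g (ζ, zz j)‖ ≤ ε₁ := by
            intro ζ hζ
            rw [Set.uIoc_of_le hmono] at hζ
            have hζab : ζ ∈ Set.Icc a b := by
              constructor
              · exact le_trans (hzm k (by omega)).1 hζ.1.le
              · exact le_trans hζ.2 (hzm (k + 1) hkN).2
            have hp : ((zz i, zz k, zz j) : ℝ × ℝ × ℝ) ∈ cube := by
              refine ⟨hzm i hiN, hzm k (by omega), hzm j (by omega)⟩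
            have hq' : ((zz i, ζ, zz j) : ℝ × ℝ × ℝ) ∈ cube := by
              refine ⟨hzm i hiN, hζab, hzm j (by omega)⟩
            have hdist : dist ((zz i, zz k, zz j) : ℝ × ℝ × ℝ) (zz i, ζ, zz j) < δ := by
              rw [Prod.dist_eq, Prod.dist_eq]
              simp only [dist_self]
              have h1 : dist (zz k) ζ ≤ Δ := by
                rw [Real.dist_eq, abs_of_nonpos (by linarith [hζ.1.le])]
                linarith [hζ.2, hzk]
              exact max_lt hδ0 (max_lt (lt_of_le_of_lt h1 hδN) hδ0)
            have := hδ _ hp _ hq' hdist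
            rw [dist_eq_norm] at this
            exact le_of_lt (by simpa [hHdef] using this)
          refine le_trans (intervalIntegral.norm_integral_le_of_norm_le_const hbound) ?_
          rw [hzk, abs_of_pos hΔpos]
        refine le_trans (Finset.sum_le_sum hcell) ?_
        rw [Finset.sum_const, Finset.card_range, nsmul_eq_mul]
        have hij : ((i - j : ℕ) : ℝ) ≤ (N : ℝ) := by exact_mod_cast (by omega : i - j ≤ N)
        have h6 : ((i - j : ℕ) : ℝ) * (ε₁ * Δ) ≤ (N : ℝ) * Δ * ε₁ := by
          rw [mul_comm ε₁ Δ, ← mul_assoc]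
          exact mul_le_mul_of_nonneg_right
            (mul_le_mul_of_nonneg_right hij hΔpos.le) hε₁0.le
        refine h6.trans ?_
        rw [hNΔ, hε₁def]
        rw [show (b - a) * (ε / (3 * (b - a + 1))) = (ε / 3) * ((b - a)/(b - a + 1)) by
          field_simp]
        exact mul_le_of_le_one_right (by positivity)
          (by rw [div_le_one (by linarith)]; linarith)
      · -- top endpoint term
        rw [hqdef]
        simp only [norm_mul, hΔcnorm]
        have h7 : ‖f (zz i, zz i)‖ * ‖g (zz i, zz j)‖ ≤ M * B :=
          mul_le_mul (hM _) (hgB _ _ (hzm i hiN) (hzm j (by omega))) (norm_nonneg _) hM0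
        calc Δ * (‖f (zz i, zz i)‖ * ‖g (zz i, zz j)‖) ≤ Δ * (M * B) :=
              mul_le_mul_of_nonneg_left h7 hΔpos.le
          _ = M * B * Δ := by ring
          _ ≤ ε / 3 := hMB
    -- combine
    calc ‖Δc ^ (n + 1) * Gd a b f N (n + 1) i j - volterraPow f (n + 1) (zz i, zz j)‖
        ≤ ‖Δc ^ (n + 1) * Gd a b f N (n + 1) i j - ∑ k ∈ Finset.Icc j i, q k‖
          + ‖(∑ k ∈ Finset.Icc j i, q k) - volterraPow f (n + 1) (zz i, zz j)‖ :=
          norm_sub_le_norm_sub_add_norm_sub _ _ _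
      _ ≤ ε / 3 + (ε / 3 + ε / 3) := add_le_add (by rw [hGd]; exact stepA) stepB
      _ = ε := by ring



theorem pow_self_le_descFactorial (n : ℕ) : ∀ k, k ≤ n → n ^ k ≤ (2 * n).descFactorial k := by
  intro k
  induction k with
  | zero => simp
  | succ k ih =>
    intro hk
    rw [pow_succ, Nat.descFactorial_succ]
    have h1 : n ≤ 2 * n - k := by omega
    calc n ^ k * n ≤ (2 * n).descFactorial k * (2 * n - k) :=
          Nat.mul_le_mul (ih (by omega)) h1
      _ = (2 * n - k) * (2 * n).descFactorial k := Nat.mul_comm _ _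

theorem pow_self_le (n : ℕ) : n ^ n ≤ 4 ^ n * n.factorial := by
  have h1 : n ^ n ≤ (2 * n).descFactorial n := pow_self_le_descFactorial n n le_rfl
  have h2 : (2 * n).descFactorial n = n.factorial * (2 * n).choose n :=
    Nat.descFactorial_eq_factorial_mul_choose _ _
  have h3 : (2 * n).choose n ≤ 4 ^ n := by
    calc (2 * n).choose n ≤ ∑ m ∈ Finset.range (2 * n + 1), (2 * n).choose m :=
          Finset.single_le_sum (fun m _ => Nat.zero_le _)
            (Finset.mem_range.2 (by omega))
      _ = 2 ^ (2 * n) := Nat.sum_range_choose _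
      _ = 4 ^ n := by rw [pow_mul]; norm_num
  calc n ^ n ≤ n.factorial * (2 * n).choose n := h2 ▸ h1
    _ ≤ n.factorial * 4 ^ n := Nat.mul_le_mul_left _ h3
    _ = 4 ^ n * n.factorial := Nat.mul_comm _ _

theorem arith (r M : ℝ) (hr : 0 < r) (hM0 : 0 ≤ M) :
    ∃ N₀ : ℕ, 1 ≤ N₀ ∧ ∀ N : ℕ, N₀ ≤ N → ∀ n : ℕ,
      (r / N) ^ n * (M ^ (n + 1) * (((N + n).choose n : ℕ) : ℝ))
        ≤ M * ((2 * r * M) ^ n / n.factorial) + M * (1 / 2) ^ n := by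
  refine ⟨⌈16 * r * M⌉₊ + 1, by omega, fun N hN n => ?_⟩
  have hN1 : 1 ≤ N := by omega
  have hNpos : (0:ℝ) < N := by exact_mod_cast hN1
  have h16 : 16 * r * M ≤ N := by
    refine le_trans (Nat.le_ceil _) ?_
    exact_mod_cast Nat.le_of_succ_le hN
  have hfact : (0:ℝ) < ((n.factorial : ℕ) : ℝ) := by exact_mod_cast n.factorial_pos
  -- key natural-number inequality
  have hnat : (N + n).choose n * n.factorial ≤ 2 ^ n * N ^ n + 8 ^ n * n.factorial := by
    calc (N + n).choose n * n.factorial = (N + n).descFactorial n := by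
          rw [Nat.descFactorial_eq_factorial_mul_choose, Nat.mul_comm]
      _ ≤ (N + n) ^ n := Nat.descFactorial_le_pow _ _
      _ ≤ (2 * max N n) ^ n := Nat.pow_le_pow_left (by omega) n
      _ = 2 ^ n * (max N n) ^ n := by rw [Nat.mul_pow]
      _ ≤ 2 ^ n * (N ^ n + n ^ n) := by
          refine Nat.mul_le_mul_left _ ?_
          rcases le_total N n with h | h
          · rw [max_eq_right h]; omega
          · rw [max_eq_left h]; omega
      _ ≤ 2 ^ n * (N ^ n + 4 ^ n * n.factorial) :=
          Nat.mul_le_mul_left _ (Nat.add_le_add_left (pow_self_le n) _)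
      _ = 2 ^ n * N ^ n + 8 ^ n * n.factorial := by
          rw [Nat.mul_add]
          congr 1
          rw [← Nat.mul_assoc, ← Nat.mul_pow]
  have hC : (((N + n).choose n : ℕ) : ℝ) ≤ 2 ^ n * (N:ℝ) ^ n / n.factorial + 8 ^ n := by
    have h2 : (((N + n).choose n : ℕ) : ℝ)
        ≤ (2 ^ n * (N:ℝ) ^ n + 8 ^ n * n.factorial) / n.factorial := by
      rw [le_div_iff₀ hfact]
      exact_mod_cast hnat
    refine h2.trans_eq ?_
    field_simp
  have step1 : (r / N) ^ n * (M ^ (n + 1) * (((N + n).choose n : ℕ) : ℝ))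
      ≤ (r / N) ^ n * (M ^ (n + 1) * (2 ^ n * (N:ℝ) ^ n / n.factorial + 8 ^ n)) := by
    have h0 : (0:ℝ) ≤ (r / N) ^ n := by positivity
    have h1 : (0:ℝ) ≤ M ^ (n + 1) := by positivity
    exact mul_le_mul_of_nonneg_left (mul_le_mul_of_nonneg_left hC h1) h0
  refine step1.trans ?_
  have step2 : (r / N) ^ n * (M ^ (n + 1) * (2 ^ n * (N:ℝ) ^ n / n.factorial + 8 ^ n))
      = M * ((2 * r * M) ^ n / n.factorial) + M * (8 * r * M / N) ^ n := by
    simp only [div_pow, mul_pow]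
    field_simp
    ring
  rw [step2]
  have step3 : M * (8 * r * M / N) ^ n ≤ M * (1 / 2) ^ n := by
    refine mul_le_mul_of_nonneg_left (pow_le_pow_left₀ (by positivity) ?_ n) hM0
    rw [div_le_div_iff₀ hNpos (by norm_num : (0:ℝ) < 2)]
    linarith
  linarith



set_option maxHeartbeats 2000000 in
theorem main (a b : ℝ) (hab : a < b) (f : ℝ × ℝ → ℂ) (hf : Continuous f)
    (M : ℝ) (hM : ∀ p, ‖f p‖ ≤ M) :
    (∀ᶠ N : ℕ in Filter.atTop,
      IsUnit ((1 : Matrix (Fin (N + 1)) (Fin (N + 1)) ℂ) -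
        (((b - a) / N : ℝ) : ℂ) • gridF a b f N)) ∧
    Filter.Tendsto
      (fun N : ℕ => (1 / (((b - a) / N : ℝ) : ℂ)) *
        ((((1 : Matrix (Fin (N + 1)) (Fin (N + 1)) ℂ) -
            (((b - a) / N : ℝ) : ℂ) • gridF a b f N)⁻¹ - 1) (Fin.last N) 0))
      Filter.atTop (nhds (∑' n : ℕ, volterraPow f n (b, a))) := by
  have hM0 : 0 ≤ M := le_trans (norm_nonneg _) (hM (0, 0))
  have hr : (0:ℝ) < b - a := by linarith
  obtain ⟨N₀, hN₀1, hAr⟩ := arith (b - a) M hr hM0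
  set c : ℕ → ℝ := fun n => M * ((2 * (b - a) * M) ^ n / n.factorial) + M * (1/2) ^ n
    with hcdef
  have hc : Summable c := by
    refine Summable.add ((Real.summable_pow_div_factorial _).mul_left M) ?_
    exact (summable_geometric_of_lt_one (by norm_num) (by norm_num)).mul_left M
  have hc0 : ∀ n, 0 ≤ c n := by
    intro n
    rw [hcdef]
    have h1 : (0:ℝ) ≤ (2 * (b - a) * M) ^ n / n.factorial := by positivity
    have h2 : (0:ℝ) ≤ (1/2 : ℝ) ^ n := by positivity
    nlinarith
  have key : ∀ N : ℕ, N₀ ≤ N →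
      IsUnit ((1 : Matrix (Fin (N + 1)) (Fin (N + 1)) ℂ) -
        (((b - a) / N : ℝ) : ℂ) • gridF a b f N) ∧
      (1 / (((b - a) / N : ℝ) : ℂ)) *
        ((((1 : Matrix (Fin (N + 1)) (Fin (N + 1)) ℂ) -
            (((b - a) / N : ℝ) : ℂ) • gridF a b f N)⁻¹ - 1) (Fin.last N) 0)
        = ∑' n : ℕ, (((b - a) / N : ℝ) : ℂ) ^ n * Gd a b f N n N 0 := by
    intro N hN
    have hN1 : 1 ≤ N := le_trans hN₀1 hN
    have hNpos : (0:ℝ) < N := by exact_mod_cast hN1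
    have hΔpos : 0 < (b - a) / N := div_pos hr hNpos
    set Δ : ℝ := (b - a) / N with hΔdef
    set Δc : ℂ := ((Δ : ℝ) : ℂ) with hΔcdef
    have hΔc0 : Δc ≠ 0 := by
      rw [hΔcdef]
      exact_mod_cast ne_of_gt hΔpos
    set A : Matrix (Fin (N + 1)) (Fin (N + 1)) ℂ := Δc • gridF a b f N with hAdef
    have hpow : ∀ (n : ℕ) (i j : Fin (N + 1)),
        (A ^ (n + 1)) i j = Δc ^ (n + 1) * Gd a b f N n (i : ℕ) (j : ℕ) := by
      intro n i j
      rw [hAdef, smul_pow, Matrix.smul_apply, smul_eq_mul]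
      congr 1
      exact gridF_pow a b f N n i j
    have hGbd : ∀ (n : ℕ) (i j : Fin (N + 1)), ‖(A ^ (n + 1)) i j‖ ≤ Δ * c n := by
      intro n i j
      rw [hpow, norm_mul, norm_pow, hΔcdef, Complex.norm_real, Real.norm_eq_abs,
        abs_of_pos hΔpos]
      by_cases hji : (j : ℕ) ≤ (i : ℕ)
      · have h1 := Gd_bound a b f M hM N n i j hji
        have h2 : ((((i:ℕ) - (j:ℕ) + n).choose n : ℕ) : ℝ)
            ≤ (((N + n).choose n : ℕ) : ℝ) := by
          exact_mod_cast Nat.choose_le_choose n (by omega)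
        calc Δ ^ (n + 1) * ‖Gd a b f N n (i:ℕ) (j:ℕ)‖
            ≤ Δ ^ (n + 1) * (M ^ (n + 1) * (((N + n).choose n : ℕ) : ℝ)) := by
              refine mul_le_mul_of_nonneg_left (h1.trans ?_) (by positivity)
              exact mul_le_mul_of_nonneg_left h2 (by positivity)
          _ = Δ * (((b - a) / N) ^ n * (M ^ (n + 1) * (((N + n).choose n : ℕ) : ℝ))) := by
              rw [← hΔdef]; ring
          _ ≤ Δ * c n := mul_le_mul_of_nonneg_left (hAr N hN n) hΔpos.le
      · rw [Gd_tri a b f N n _ _ (by omega), norm_zero, mul_zero]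
        exact mul_nonneg hΔpos.le (hc0 n)
    have hSumm : ∀ i j : Fin (N + 1), Summable (fun n => (A ^ n) i j) := by
      intro i j
      rw [← summable_nat_add_iff 1]
      exact Summable.of_norm_bounded (hc.mul_left Δ) (fun n => hGbd n i j)
    set S : Matrix (Fin (N + 1)) (Fin (N + 1)) ℂ := fun i j => ∑' n, (A ^ n) i j
      with hSdef
    have hRight : (1 - A) * S = 1 := by
      ext i j
      rw [Matrix.mul_apply]
      have e1 : ∀ k : Fin (N + 1), (1 - A) i k * S k j
          = ∑' n, (1 - A) i k * (A ^ n) k j := fun k => tsum_mul_left.symm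
      rw [Finset.sum_congr rfl fun k _ => e1 k,
        ← Summable.tsum_finsetSum (fun k _ => (hSumm k j).mul_left _)]
      have e2 : ∀ n : ℕ, (∑ k, (1 - A) i k * (A ^ n) k j)
          = (A ^ n) i j - (A ^ (n + 1)) i j := by
        intro n
        have h3 : (1 - A) * A ^ n = A ^ n - A ^ (n + 1) := by
          rw [sub_mul, one_mul, ← pow_succ']
        rw [← Matrix.mul_apply, h3, Matrix.sub_apply]
      rw [tsum_congr e2]
      have hs1 := hSumm i j
      have hs2 : Summable (fun n => (A ^ (n + 1)) i j) :=
        Summable.of_norm_bounded (hc.mul_left Δ) (fun n => hGbd n i j)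
      rw [Summable.tsum_sub hs1 hs2, Summable.tsum_eq_zero_add hs1, pow_zero]
      ring
    have hUnit : IsUnit (1 - A) :=
      ⟨⟨1 - A, S, hRight, mul_eq_one_comm.1 hRight⟩, rfl⟩
    have hInv : (1 - A)⁻¹ = S := Matrix.inv_eq_right_inv hRight
    refine ⟨hUnit, ?_⟩
    rw [hInv, Matrix.sub_apply]
    have hne : (Fin.last N) ≠ (0 : Fin (N + 1)) := by
      rw [Fin.ne_iff_vne, Fin.val_last, Fin.val_zero]
      omega
    rw [Matrix.one_apply_ne hne, sub_zero,
      show S (Fin.last N) 0 = ∑' n, (A ^ n) (Fin.last N) 0 from rfl]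
    rw [Summable.tsum_eq_zero_add (hSumm _ _), pow_zero, Matrix.one_apply_ne hne, zero_add,
      ← tsum_mul_left]
    refine tsum_congr fun n => ?_
    rw [hpow, Fin.val_last, Fin.val_zero]
    rw [div_mul_eq_mul_div, one_mul, pow_succ', mul_assoc, mul_comm Δc, mul_assoc]
    rw [mul_div_assoc, mul_div_assoc, div_self hΔc0, mul_one]
  constructor
  · filter_upwards [Filter.eventually_ge_atTop N₀] with N hN
    exact (key N hN).1
  · have hpt : ∀ n : ℕ, Filter.Tendsto
        (fun N : ℕ => (((b - a) / N : ℝ) : ℂ) ^ n * Gd a b f N n N 0)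
        Filter.atTop (nhds (volterraPow f n (b, a))) := by
      intro n
      rw [Metric.tendsto_nhds]
      intro ε hε
      filter_upwards [keyP a b hab hf hM n (ε/2) (by positivity),
        Filter.eventually_ge_atTop 1] with N hK hN1
      have h3 := hK N 0 (Nat.zero_le N) le_rfl
      rw [z_last a b (by omega), z_zero] at h3
      rw [dist_eq_norm]
      exact lt_of_le_of_lt h3 (by linarith)
    have hbd : ∀ᶠ N : ℕ in Filter.atTop, ∀ n : ℕ,
        ‖(((b - a) / N : ℝ) : ℂ) ^ n * Gd a b f N n N 0‖ ≤ c n := by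
      filter_upwards [Filter.eventually_ge_atTop N₀] with N hN n
      have hN1 : 1 ≤ N := le_trans hN₀1 hN
      have hNpos : (0:ℝ) < N := by exact_mod_cast hN1
      have hΔpos : 0 < (b - a) / N := div_pos hr hNpos
      rw [norm_mul, norm_pow, Complex.norm_real, Real.norm_eq_abs, abs_of_pos hΔpos]
      refine le_trans (mul_le_mul_of_nonneg_left
        (Gd_bound a b f M hM N n N 0 (Nat.zero_le N)) (by positivity)) ?_
      rw [Nat.sub_zero]
      exact hAr N hN n
    have hT := tendsto_tsum_of_dominated_convergence hc hpt hbd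
    refine Filter.Tendsto.congr' ?_ hT
    filter_upwards [Filter.eventually_ge_atTop N₀] with N hN
    exact ((key N hN).2).symm


end VoltAux


/-- The corner entry of the discretized ∗-resolvent (rectangular rule) converges
to the sum of the iterated Volterra powers at `(b, a)`. -/
theorem discretized_resolvent_tendsto (a b : ℝ) (hab : a < b) (f : ℝ × ℝ → ℂ)
    (hf : ContinuousOn f (Set.Icc a b ×ˢ Set.Icc a b)) :
    (∀ᶠ N : ℕ in Filter.atTop,
      IsUnit ((1 : Matrix (Fin (N + 1)) (Fin (N + 1)) ℂ) -
        (((b - a) / N : ℝ) : ℂ) • gridF a b f N)) ∧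
    Filter.Tendsto
      (fun N : ℕ => (1 / (((b - a) / N : ℝ) : ℂ)) *
        ((((1 : Matrix (Fin (N + 1)) (Fin (N + 1)) ℂ) -
            (((b - a) / N : ℝ) : ℂ) • gridF a b f N)⁻¹ - 1) (Fin.last N) 0))
      Filter.atTop (nhds (∑' n : ℕ, volterraPow f n (b, a))) := by
  obtain ⟨M, hMb⟩ := (isCompact_Icc.prod isCompact_Icc).exists_bound_of_continuousOn hf
  set proj : ℝ → ℝ := fun x => ((Set.projIcc a b hab.le x : Set.Icc a b) : ℝ) with hproj
  set F : ℝ × ℝ → ℂ := fun p => f (proj p.1, proj p.2) with hFdef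
  have hmem : ∀ p : ℝ × ℝ, ((proj p.1, proj p.2) : ℝ × ℝ) ∈ Set.Icc a b ×ˢ Set.Icc a b :=
    fun p => ⟨(Set.projIcc a b hab.le p.1).2, (Set.projIcc a b hab.le p.2).2⟩
  have hFc : Continuous F := by
    have hpair : Continuous fun p : ℝ × ℝ => ((proj p.1, proj p.2) : ℝ × ℝ) := by
      refine Continuous.prodMk ?_ ?_ <;>
        exact (continuous_subtype_val.comp continuous_projIcc).comp (by fun_prop)
    exact hf.comp_continuous hpair hmem
  have hFM : ∀ p, ‖F p‖ ≤ M := fun p => hMb _ (hmem p)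
  have hproj_eq : ∀ x ∈ Set.Icc a b, proj x = x := by
    intro x hx
    rw [hproj]
    simp only [Set.projIcc_of_mem hab.le hx]
  have hFeq : ∀ p : ℝ × ℝ, p ∈ Set.Icc a b ×ˢ Set.Icc a b → F p = f p := by
    intro p hp
    rw [hFdef]
    simp only
    rw [hproj_eq _ hp.1, hproj_eq _ hp.2]
  have hgrid : gridF a b f = gridF a b F := by
    funext N i j
    simp only [gridF]
    split
    · next h =>
      refine (hFeq _ ⟨?_, ?_⟩).symm
      · exact VoltAux.z_mem a b hab.le (Nat.lt_succ_iff.mp i.isLt)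
      · exact VoltAux.z_mem a b hab.le (Nat.lt_succ_iff.mp j.isLt)
    · rfl
  have hvp : ∀ n : ℕ, ∀ x ∈ Set.Icc a b, ∀ y ∈ Set.Icc a b,
      volterraPow f n (x, y) = volterraPow F n (x, y) := by
    intro n
    induction n with
    | zero => intro x hx y hy; exact (hFeq (x, y) ⟨hx, hy⟩).symm
    | succ n ih =>
      intro x hx y hy
      show (∫ ζ in y..x, f (x, ζ) * volterraPow f n (ζ, y))
          = ∫ ζ in y..x, F (x, ζ) * volterraPow F n (ζ, y)
      refine intervalIntegral.integral_congr ?_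
      intro ζ hζ
      have hζab : ζ ∈ Set.Icc a b := by
        have hsub : Set.uIcc y x ⊆ Set.Icc a b := by
          rw [← Set.uIcc_of_le hab.le]
          exact Set.uIcc_subset_uIcc (by rw [Set.uIcc_of_le hab.le]; exact hy)
            (by rw [Set.uIcc_of_le hab.le]; exact hx)
        exact hsub hζ
      simp only
      rw [ih ζ hζab y hy, hFeq (x, ζ) ⟨hx, hζab⟩]
  have hsum_eq : (∑' n : ℕ, volterraPow f n (b, a)) = ∑' n : ℕ, volterraPow F n (b, a) :=
    tsum_congr fun n => hvp n b (Set.right_mem_Icc.2 hab.le) a (Set.left_mem_Icc.2 hab.le)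
  rw [hgrid, hsum_eq]
  exact VoltAux.main a b hab F hFc M hFM
end

section
/- Let a < b be real numbers and let f : ℝ × ℝ → ℂ be continuous on [a,b] × [a,b]. Define G(x, y) := ∑_{n=1}^∞ f^{∗n}(x, y), the sum of the iterated Volterra powers. Then G is continuous on the set {(x, y) ∈ [a,b] × [a,b] : y ≤ x}. -/
/-- The sum of the iterated Volterra powers of a continuous kernel is continuous
on the triangle `{(x,y) ∈ [a,b]² : y ≤ x}`. -/
theorem volterraNeumann_continuousOn (a b : ℝ) (hab : a < b) (f : ℝ × ℝ → ℂ)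
    (hf : ContinuousOn f (Set.Icc a b ×ˢ Set.Icc a b))
    (G : ℝ × ℝ → ℂ) (hG : G = fun p => ∑' n : ℕ, volterraPow f n p) :
    ContinuousOn G {p : ℝ × ℝ | p ∈ Set.Icc a b ×ˢ Set.Icc a b ∧ p.2 ≤ p.1} := by
  set S : Set (ℝ × ℝ) := Set.Icc a b ×ˢ Set.Icc a b with hS
  set T : Set (ℝ × ℝ) := {p : ℝ × ℝ | p ∈ S ∧ p.2 ≤ p.1} with hT
  have hScl : IsClosed S := (isClosed_Icc).prod isClosed_Icc
  -- Tietze extension of f to all of ℝ²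
  obtain ⟨F, hFc, hFf⟩ : ∃ F : ℝ × ℝ → ℂ, Continuous F ∧ ∀ p ∈ S, F p = f p := by
    obtain ⟨g, hg⟩ := ContinuousMap.exists_restrict_eq (Y := ℂ) hScl
      ⟨S.restrict f, hf.restrict⟩
    refine ⟨g, g.continuous, fun p hp => ?_⟩
    have := DFunLike.congr_fun hg (⟨p, hp⟩ : S)
    exact this
  -- membership facts
  have hmemS : ∀ x y : ℝ, x ∈ Set.Icc a b → y ∈ Set.Icc a b → ((x, y) : ℝ × ℝ) ∈ S := by
    intro x y hx hy; exact Set.mk_mem_prod hx hy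
  -- global continuity of the iterates of F
  have hpow_cont : ∀ n, Continuous (volterraPow F n) := by
    intro n
    induction n with
    | zero => exact hFc
    | succ n ih =>
      show Continuous (volterraComp F (volterraPow F n))
      unfold volterraComp
      have huncurry : Continuous (Function.uncurry
          (fun (p : ℝ × ℝ) (ζ : ℝ) => F (p.1, ζ) * volterraPow F n (ζ, p.2))) := by
        apply Continuous.mul
        · exact hFc.comp (by fun_prop)
        · exact ih.comp (by fun_prop)
      have h1 : Continuous fun p : ℝ × ℝ =>
          ∫ ζ in a..p.1, F (p.1, ζ) * volterraPow F n (ζ, p.2) :=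
        intervalIntegral.continuous_parametric_intervalIntegral_of_continuous huncurry
          continuous_fst
      have h2 : Continuous fun p : ℝ × ℝ =>
          ∫ ζ in a..p.2, F (p.1, ζ) * volterraPow F n (ζ, p.2) :=
        intervalIntegral.continuous_parametric_intervalIntegral_of_continuous huncurry
          continuous_snd
      have hkey : (fun p : ℝ × ℝ => ∫ ζ in p.2..p.1, F (p.1, ζ) * volterraPow F n (ζ, p.2))
          = fun p : ℝ × ℝ => (∫ ζ in a..p.1, F (p.1, ζ) * volterraPow F n (ζ, p.2))
            - ∫ ζ in a..p.2, F (p.1, ζ) * volterraPow F n (ζ, p.2) := by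
        funext p
        have hcont : Continuous fun ζ : ℝ => F (p.1, ζ) * volterraPow F n (ζ, p.2) := by
          apply Continuous.mul
          · exact hFc.comp (by fun_prop)
          · exact ih.comp (by fun_prop)
        rw [intervalIntegral.integral_interval_sub_left (hcont.intervalIntegrable _ _)
          (hcont.intervalIntegrable _ _)]
      rw [hkey]
      exact h1.sub h2
  -- bound on F on S
  obtain ⟨M₀, hM₀⟩ := ((isCompact_Icc).prod isCompact_Icc).exists_bound_of_continuousOn
    hFc.continuousOn
  set M : ℝ := max M₀ 0 with hM
  have hM0 : 0 ≤ M := le_max_right _ _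
  have hMb : ∀ p ∈ S, ‖F p‖ ≤ M := fun p hp => le_trans (hM₀ p hp) (le_max_left _ _)
  -- pointwise bound on the triangle
  have hbound : ∀ n, ∀ p ∈ T, ‖volterraPow F n p‖ ≤
      M ^ (n + 1) * (p.1 - p.2) ^ n / n.factorial := by
    intro n
    induction n with
    | zero =>
      intro p hp
      simpa [volterraPow] using hMb p hp.1
    | succ n ih =>
      rintro ⟨x, y⟩ ⟨⟨hx, hy⟩, (hyx : y ≤ x)⟩
      simp only at hx hy
      show ‖∫ ζ in y..x, F (x, ζ) * volterraPow F n (ζ, y)‖ ≤ _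
      have hIoc : Set.uIoc y x = Set.Ioc y x := Set.uIoc_of_le hyx
      set C : ℝ := M ^ (n + 2) / n.factorial with hC
      have hC0 : 0 ≤ C := div_nonneg (pow_nonneg hM0 _) (Nat.cast_nonneg _)
      have hgint : IntervalIntegrable (fun ζ => C * (ζ - y) ^ n) MeasureTheory.volume y x :=
        (by fun_prop : Continuous fun ζ : ℝ => C * (ζ - y) ^ n).intervalIntegrable _ _
      have hle : ‖∫ ζ in y..x, F (x, ζ) * volterraPow F n (ζ, y)‖ ≤
          |∫ ζ in y..x, C * (ζ - y) ^ n| := by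
        apply intervalIntegral.norm_integral_le_abs_of_norm_le _ hgint
        rw [MeasureTheory.ae_restrict_iff' measurableSet_uIoc]
        filter_upwards with ζ hζ
        rw [hIoc] at hζ
        obtain ⟨hζ1, hζ2⟩ := hζ
        have hζab : ζ ∈ Set.Icc a b := ⟨le_trans hy.1 hζ1.le, le_trans hζ2 hx.2⟩
        have h1 : ‖F (x, ζ)‖ ≤ M := hMb _ (hmemS _ _ hx hζab)
        have h2 : ‖volterraPow F n (ζ, y)‖ ≤ M ^ (n + 1) * (ζ - y) ^ n / n.factorial :=
          ih (ζ, y) ⟨Set.mk_mem_prod hζab hy, hζ1.le⟩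
        calc ‖F (x, ζ) * volterraPow F n (ζ, y)‖
            = ‖F (x, ζ)‖ * ‖volterraPow F n (ζ, y)‖ := norm_mul _ _
          _ ≤ M * (M ^ (n + 1) * (ζ - y) ^ n / n.factorial) := by
              apply mul_le_mul h1 h2 (norm_nonneg _) hM0
          _ = C * (ζ - y) ^ n := by rw [hC]; ring
      have hval : (∫ ζ in y..x, C * (ζ - y) ^ n) = C * ((x - y) ^ (n + 1) / (n + 1)) := by
        rw [intervalIntegral.integral_const_mul]
        have : (∫ ζ in y..x, (ζ - y) ^ n) = ∫ u in y - y..x - y, u ^ n :=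
          intervalIntegral.integral_comp_sub_right (fun u => u ^ n) y
        rw [this, sub_self, integral_pow]
        push_cast
        ring
      refine hle.trans ?_
      rw [hval, abs_of_nonneg (mul_nonneg hC0 (div_nonneg
        (pow_nonneg (sub_nonneg.mpr hyx) _) (by positivity)))]
      have heq : C * ((x - y) ^ (n + 1) / ((n : ℝ) + 1)) =
          M ^ (n + 1 + 1) * (x - y) ^ (n + 1) / (n + 1).factorial := by
        rw [hC, div_mul_div_comm, mul_comm ((n.factorial : ℝ)) ((n : ℝ) + 1),
          Nat.factorial_succ]
        push_cast
        ring
      exact le_of_eq heq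
  -- the iterates of f and F agree on the triangle
  have hpow_eq : ∀ n, ∀ p ∈ T, volterraPow F n p = volterraPow f n p := by
    intro n
    induction n with
    | zero => intro p hp; exact hFf p hp.1
    | succ n ih =>
      rintro ⟨x, y⟩ ⟨⟨hx, hy⟩, (hyx : y ≤ x)⟩
      simp only at hx hy
      show (∫ ζ in y..x, F (x, ζ) * volterraPow F n (ζ, y)) =
        ∫ ζ in y..x, f (x, ζ) * volterraPow f n (ζ, y)
      apply intervalIntegral.integral_congr
      intro ζ hζ
      rw [Set.uIcc_of_le hyx] at hζ
      have hζab : ζ ∈ Set.Icc a b := ⟨le_trans hy.1 hζ.1, le_trans hζ.2 hx.2⟩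
      show F (x, ζ) * volterraPow F n (ζ, y) = f (x, ζ) * volterraPow f n (ζ, y)
      rw [hFf (x, ζ) (hmemS _ _ hx hζab), ih (ζ, y) ⟨Set.mk_mem_prod hζab hy, hζ.1⟩]
  -- uniform bound and summability
  set u : ℕ → ℝ := fun n => M ^ (n + 1) * (b - a) ^ n / n.factorial with hu
  have hu_summable : Summable u := by
    have h := (Real.summable_pow_div_factorial (M * (b - a))).mul_left M
    apply h.congr
    intro n
    rw [hu]
    simp only [mul_pow]
    rw [pow_succ]
    ring
  have hub : ∀ n, ∀ p ∈ T, ‖volterraPow F n p‖ ≤ u n := by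
    rintro n ⟨x, y⟩ hp
    refine (hbound n _ hp).trans ?_
    obtain ⟨⟨hx, hy⟩, (hyx : y ≤ x)⟩ := hp
    simp only at hx hy
    have h1 : (x - y : ℝ) ^ n ≤ (b - a) ^ n :=
      pow_le_pow_left₀ (by simpa using hyx) (by linarith [hx.2, hy.1]) n
    apply div_le_div_of_nonneg_right ?_ (by positivity)
    · exact mul_le_mul_of_nonneg_left h1 (pow_nonneg hM0 _)
  have hcont : ContinuousOn (fun p => ∑' n : ℕ, volterraPow F n p) T :=
    continuousOn_tsum (fun n => (hpow_cont n).continuousOn) hu_summable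
      (fun n p hp => hub n p hp)
  rw [hG]
  apply hcont.congr
  intro p hp
  exact tsum_congr fun n => (hpow_eq n p hp).symm
end
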